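/- For every positive integer n, there exists an integer ℓ with 1 ≤ ℓ ≤ 5 such that the fractional part of φ·(n+ℓ) is less than 1/(√5·φ), where φ = (1+√5)/2. -/
import Mathlib


noncomputable def phi : ℝ := (1 + Real.sqrt 5) / 2

lemma frac_shift (x o : ℝ) : Int.fract (x + o) = Int.fract (Int.fract x + o) := by
  have h : Int.fract x + o = x + o - (⌊x⌋ : ℝ) := by rw [Int.fract]; ring
  rw [h, Int.fract_sub_intCast]

lemma fract_lt_of₁ (x o c : ℝ) (h0 : 0 ≤ Int.fract x + o) (h1 : Int.fract x + o < c)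
    (hc : c ≤ 1) : Int.fract (x + o) < c := by
  rw [frac_shift, Int.fract_eq_self.mpr ⟨h0, lt_of_lt_of_le h1 hc⟩]
  exact h1

lemma fract_lt_of₂ (x o c : ℝ) (h0 : 1 ≤ Int.fract x + o) (h1 : Int.fract x + o < 1 + c)
    (hc : c ≤ 1) : Int.fract (x + o) < c := by
  rw [frac_shift]
  have h : Int.fract x + o = (Int.fract x + o - 1) + (1 : ℤ) := by push_cast; ring
  rw [h, Int.fract_add_intCast, Int.fract_eq_self.mpr ⟨by linarith, by linarith⟩]
  linarith

theorem stmt17 (n : ℕ) (hn : 1 ≤ n) :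
    ∃ ℓ : ℕ, 1 ≤ ℓ ∧ ℓ ≤ 5 ∧
      Int.fract (phi * ((n : ℝ) + (ℓ : ℝ))) < 1 / (Real.sqrt 5 * phi) := by
  set s := Real.sqrt 5 with hs_def
  have hs : s * s = 5 := Real.mul_self_sqrt (by norm_num)
  have hslb : 2.236 < s := by nlinarith [Real.sqrt_nonneg 5]
  have hsub : s < 2.2361 := by nlinarith [Real.sqrt_nonneg 5]
  have hphi : phi = (1 + s) / 2 := rfl
  have hc : 1 / (s * phi) = (5 - s) / 10 := by
    rw [hphi]
    rw [div_eq_div_iff (by nlinarith) (by norm_num)]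
    nlinarith
  rw [hc]
  have hc1 : (5 - s) / 10 ≤ 1 := by nlinarith
  set t := Int.fract (phi * (n : ℝ)) with ht_def
  have ht0 : 0 ≤ t := Int.fract_nonneg _
  have ht1 : t < 1 := Int.fract_lt_one _
  rcases lt_or_ge t 0.17 with h | h
  · -- ℓ = 5
    refine ⟨5, by norm_num, by norm_num, ?_⟩
    have e : phi * ((n : ℝ) + 5) = (phi * n + (5 * s - 11) / 2) + (8 : ℤ) := by
      rw [hphi]; push_cast; ring
    push_cast
    rw [e, Int.fract_add_intCast]
    exact fract_lt_of₁ _ _ _ (by rw [← ht_def]; nlinarith) (by rw [← ht_def]; nlinarith) hc1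
  rcases lt_or_ge t 0.41 with h' | h'
  · -- ℓ = 3
    refine ⟨3, by norm_num, by norm_num, ?_⟩
    have e : phi * ((n : ℝ) + 3) = (phi * n + (3 * s - 5) / 2) + (4 : ℤ) := by
      rw [hphi]; push_cast; ring
    push_cast
    rw [e, Int.fract_add_intCast]
    exact fract_lt_of₂ _ _ _ (by rw [← ht_def]; nlinarith) (by rw [← ht_def]; nlinarith) hc1
  rcases lt_or_ge t 0.64 with h'' | h''
  · -- ℓ = 1
    refine ⟨1, by norm_num, by norm_num, ?_⟩
    have e : phi * ((n : ℝ) + 1) = (phi * n + (s - 1) / 2) + (1 : ℤ) := by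
      rw [hphi]; push_cast; ring
    push_cast
    rw [e, Int.fract_add_intCast]
    exact fract_lt_of₂ _ _ _ (by rw [← ht_def]; nlinarith) (by rw [← ht_def]; nlinarith) hc1
  rcases lt_or_ge t 0.79 with h''' | h'''
  · -- ℓ = 4
    refine ⟨4, by norm_num, by norm_num, ?_⟩
    have e : phi * ((n : ℝ) + 4) = (phi * n + (2 * s - 4)) + (6 : ℤ) := by
      rw [hphi]; push_cast; ring
    push_cast
    rw [e, Int.fract_add_intCast]
    exact fract_lt_of₂ _ _ _ (by rw [← ht_def]; nlinarith) (by rw [← ht_def]; nlinarith) hc1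
  · -- ℓ = 2
    refine ⟨2, by norm_num, by norm_num, ?_⟩
    have e : phi * ((n : ℝ) + 2) = (phi * n + (s - 2)) + (3 : ℤ) := by
      rw [hphi]; push_cast; ring
    push_cast
    rw [e, Int.fract_add_intCast]
    exact fract_lt_of₂ _ _ _ (by rw [← ht_def]; nlinarith) (by rw [← ht_def]; nlinarith) hc1
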